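/- For every finite nonempty set A ⊆ ℤ^d with d ≥ 2, the number of vertices in the complement of A that are at ℓ¹-distance 1 from A and lie in the unbounded connected component of ℤ^d \ A is at least 2·|A|^{1−1/d}. -/

import Mathlib

set_option maxHeartbeats 1000000

open Finset

theorem my_holder {ι κ : Type*} (s : Finset ι) (t : Finset κ) (f : ι → κ → ℝ) (w : ι → ℝ)
    (hw : ∀ i ∈ s, 0 < w i) (hw1 : ∑ i ∈ s, w i = 1)
    (hf : ∀ i ∈ s, ∀ x ∈ t, 0 ≤ f i x) :
    ∑ x ∈ t, ∏ i ∈ s, f i x ^ w i ≤ ∏ i ∈ s, (∑ x ∈ t, f i x) ^ w i := by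
  by_cases hz : ∃ i ∈ s, ∑ x ∈ t, f i x = 0
  · obtain ⟨i, his, hSi⟩ := hz
    have hfi : ∀ x ∈ t, f i x = 0 := by
      intro x hx
      exact (Finset.sum_eq_zero_iff_of_nonneg (fun y hy => hf i his y hy)).1 hSi x hx
    have hL : ∑ x ∈ t, ∏ j ∈ s, f j x ^ w j = 0 := by
      apply Finset.sum_eq_zero
      intro x hx
      apply Finset.prod_eq_zero his
      rw [hfi x hx, Real.zero_rpow (ne_of_gt (hw i his))]
    have hR : 0 ≤ ∏ j ∈ s, (∑ x ∈ t, f j x) ^ w j :=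
      Finset.prod_nonneg fun j hj => Real.rpow_nonneg
        (Finset.sum_nonneg fun x hx => hf j hj x hx) _
    rw [hL]; exact hR
  · push_neg at hz
    set S : ι → ℝ := fun i => ∑ x ∈ t, f i x with hS
    have hSpos : ∀ i ∈ s, 0 < S i := fun i hi =>
      lt_of_le_of_ne (Finset.sum_nonneg fun x hx => hf i hi x hx) (Ne.symm (hz i hi))
    have key : ∑ x ∈ t, ∏ i ∈ s, (f i x / S i) ^ w i ≤ 1 := by
      calc ∑ x ∈ t, ∏ i ∈ s, (f i x / S i) ^ w i
          ≤ ∑ x ∈ t, ∑ i ∈ s, w i * (f i x / S i) := by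
            apply Finset.sum_le_sum
            intro x hx
            exact Real.geom_mean_le_arith_mean_weighted s w _
              (fun i hi => (hw i hi).le) hw1
              (fun i hi => div_nonneg (hf i hi x hx) (hSpos i hi).le)
        _ = ∑ i ∈ s, w i * ((∑ x ∈ t, f i x) / S i) := by
            rw [Finset.sum_comm]
            congr 1; ext i
            rw [← Finset.mul_sum, ← Finset.sum_div]
        _ = 1 := by
            rw [← hw1]
            apply Finset.sum_congr rfl
            intro i hi
            rw [div_self (ne_of_gt (hSpos i hi)), mul_one]
    have expand : ∀ x ∈ t, ∏ i ∈ s, (f i x / S i) ^ w i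
        = (∏ i ∈ s, f i x ^ w i) / ∏ i ∈ s, S i ^ w i := by
      intro x hx
      rw [← Finset.prod_div_distrib]
      apply Finset.prod_congr rfl
      intro i hi
      rw [Real.div_rpow (hf i hi x hx) (hSpos i hi).le]
    have hPpos : 0 < ∏ i ∈ s, S i ^ w i :=
      Finset.prod_pos fun i hi => Real.rpow_pos_of_pos (hSpos i hi) _
    calc ∑ x ∈ t, ∏ i ∈ s, f i x ^ w i
        = (∑ x ∈ t, ∏ i ∈ s, (f i x / S i) ^ w i) * ∏ i ∈ s, S i ^ w i := by
          rw [Finset.sum_mul]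
          apply Finset.sum_congr rfl
          intro x hx
          rw [expand x hx, div_mul_cancel₀]
          exact ne_of_gt hPpos
      _ ≤ 1 * ∏ i ∈ s, S i ^ w i := by
          exact mul_le_mul_of_nonneg_right key hPpos.le
      _ = ∏ i ∈ s, S i ^ w i := one_mul _
      _ = ∏ i ∈ s, (∑ x ∈ t, f i x) ^ w i := rfl

lemma injOn_upd {ι : Type*} [DecidableEq ι] (b : ι) (t : ℤ) :
    Set.InjOn (fun f : ι → ℤ => Function.update f b 0) {f : ι → ℤ | f b = t} := by
  intro f hf g hg h
  funext j
  by_cases hj : j = b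
  · subst hj; exact hf.trans hg.symm
  · have := congrFun h j
    simpa [Function.update_of_ne hj] using this

theorem my_LW {ι : Type*} [DecidableEq ι] [DecidableEq (ι → ℤ)] (s : Finset ι) :
    ∀ A : Finset (ι → ℤ), A.Nonempty → (∀ f ∈ A, ∀ j, j ∉ s → f j = 0) →
    A.card ^ (s.card - 1) ≤ ∏ i ∈ s, (A.image (fun f => Function.update f i 0)).card := by
  induction s using Finset.induction_on with
  | empty => intro A hAne _; simp
  | @insert a s' ha ih =>
    intro A hAne hA0
    rcases eq_or_ne s' ∅ with hs' | hs'
    · subst hs'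
      rw [Finset.card_insert_of_notMem ha, Finset.card_empty,
        Finset.prod_insert ha, Finset.prod_empty, mul_one]
      simpa using Finset.Nonempty.card_pos (hAne.image (fun f => Function.update f a 0))
    have hk : 1 ≤ s'.card := Finset.Nonempty.card_pos (Finset.nonempty_iff_ne_empty.2 hs')
    set k := s'.card with hkdef
    set T : Finset ℤ := A.image (fun f => f a) with hT
    set At : ℤ → Finset (ι → ℤ) := fun t => A.filter (fun f => f a = t) with hAt
    have haneq : ∀ i ∈ s', i ≠ a := fun i hi => fun h => ha (h ▸ hi)
    -- cardinality of A as sum over fibers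
    have F1 : A.card = ∑ t ∈ T, (At t).card := by
      simp only [hAt, hT]
      exact Finset.card_eq_sum_card_fiberwise
        (fun f hf => Finset.mem_image_of_mem (fun f => f a) hf)
    have F2 : ∀ t ∈ T, (At t).Nonempty := by
      intro t ht
      obtain ⟨f, hf, hfa⟩ := Finset.mem_image.1 ht
      exact ⟨f, Finset.mem_filter.2 ⟨hf, hfa⟩⟩
    have hAtconst : ∀ t, ↑(At t) ⊆ {f : ι → ℤ | f a = t} := by
      intro t f hf
      exact (Finset.mem_filter.1 hf).2
    have cardAt : ∀ t, ((At t).image (fun f => Function.update f a 0)).card = (At t).card :=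
      fun t => Finset.card_image_of_injOn ((injOn_upd a t).mono (hAtconst t))
    have F3 : ∀ t, (At t).card ≤ (A.image (fun f => Function.update f a 0)).card := by
      intro t
      rw [← cardAt t]
      exact Finset.card_le_card (Finset.image_subset_image (Finset.filter_subset _ _))
    -- fibers of the i-projection, i ∈ s'
    have F4 : ∀ i ∈ s', ∑ t ∈ T, ((At t).image (fun f => Function.update f i 0)).card
        ≤ (A.image (fun f => Function.update f i 0)).card := by
      intro i hi
      have hia : i ≠ a := haneq i hi
      rw [← Finset.card_biUnion]
      · apply Finset.card_le_card
        intro g hg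
        obtain ⟨t, _, hgt⟩ := Finset.mem_biUnion.1 hg
        obtain ⟨f, hf, rfl⟩ := Finset.mem_image.1 hgt
        exact Finset.mem_image_of_mem _ (Finset.filter_subset _ _ hf)
      · intro t1 h1 t2 h2 h12
        apply Finset.disjoint_left.2
        intro g hg1 hg2
        obtain ⟨f1, hf1, rfl⟩ := Finset.mem_image.1 hg1
        obtain ⟨f2, hf2, he⟩ := Finset.mem_image.1 hg2
        apply h12
        have e1 : Function.update f1 i 0 a = t1 := by
          rw [Function.update_of_ne (Ne.symm hia)]; exact (Finset.mem_filter.1 hf1).2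
        have e2 : Function.update f2 i 0 a = t2 := by
          rw [Function.update_of_ne (Ne.symm hia)]; exact (Finset.mem_filter.1 hf2).2
        rw [← e1, ← he, e2]
    -- induction hypothesis applied to slices
    have F5 : ∀ t ∈ T, (At t).card ^ (k - 1)
        ≤ ∏ i ∈ s', ((At t).image (fun f => Function.update f i 0)).card := by
      intro t ht
      have hB := ih ((At t).image (fun f => Function.update f a 0))
        ((F2 t ht).image _) ?_
      · rw [cardAt t] at hB
        refine hB.trans (le_of_eq ?_)
        apply Finset.prod_congr rfl
        intro i hi
        have hia : i ≠ a := haneq i hi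
        rw [Finset.image_image]
        have : ((fun f => Function.update f i 0) ∘ fun f => Function.update f a 0)
            = (fun f : ι → ℤ => Function.update f a 0) ∘ (fun f => Function.update f i 0) := by
          funext f
          exact Function.update_comm (Ne.symm hia) 0 0 f
        rw [this, ← Finset.image_image]
        apply Finset.card_image_of_injOn
        apply (injOn_upd a t).mono
        intro g hg
        obtain ⟨f, hf, rfl⟩ := Finset.mem_image.1 hg
        show Function.update f i 0 a = t
        rw [Function.update_of_ne (Ne.symm hia)]
        exact (Finset.mem_filter.1 hf).2
      · intro f' hf' j hj
        obtain ⟨f, hf, rfl⟩ := Finset.mem_image.1 hf'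
        by_cases hja : j = a
        · rw [hja, Function.update_self]
        · rw [Function.update_of_ne hja]
          exact hA0 f (Finset.mem_filter.1 hf).1 j (by
            intro hmem
            rcases Finset.mem_insert.1 hmem with h | h
            · exact hja h
            · exact hj h)
    -- real-number computation
    set K : ℝ := (k : ℝ) with hK
    have hKpos : (0:ℝ) < K := by rw [hK]; exact_mod_cast hk
    have hwpos : (0:ℝ) < 1 / K := by positivity
    set Pa : ℝ := ((A.image (fun f => Function.update f a 0)).card : ℝ) with hPa
    set P : ι → ℝ := fun i => ((A.image (fun f => Function.update f i 0)).card : ℝ) with hP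
    set c : ι → ℤ → ℝ := fun i t => (((At t).image (fun f => Function.update f i 0)).card : ℝ)
      with hc
    have hPa0 : 0 ≤ Pa := Nat.cast_nonneg _
    have hc0 : ∀ i t, 0 ≤ c i t := fun i t => by
      simp only [hc]; exact Nat.cast_nonneg _
    have hP0 : ∀ i, 0 ≤ P i := fun i => by
      simp only [hP]; exact Nat.cast_nonneg _
    have step1 : ∀ t ∈ T, ((At t).card : ℝ)
        ≤ Pa ^ (1/K) * ∏ i ∈ s', c i t ^ (1/K) := by
      intro t ht
      have hn1 : (1:ℝ) ≤ ((At t).card : ℝ) := by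
        exact_mod_cast Finset.Nonempty.card_pos (F2 t ht)
      have hnpos : (0:ℝ) < ((At t).card : ℝ) := lt_of_lt_of_le one_pos hn1
      have hsplit : ((At t).card : ℝ)
          = ((At t).card : ℝ) ^ (1/K) * ((At t).card : ℝ) ^ ((K-1)/K) := by
        rw [← Real.rpow_add hnpos]
        have : 1/K + (K-1)/K = 1 := by field_simp; ring
        rw [this, Real.rpow_one]
      rw [hsplit]
      apply mul_le_mul
      · refine Real.rpow_le_rpow hnpos.le ?_ hwpos.le
        simp only [hPa]
        exact_mod_cast F3 t
      · have hcast : (K - 1) = ((k - 1 : ℕ) : ℝ) := by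
          rw [hK]; push_cast [Nat.cast_sub hk]; ring
        have : ((At t).card : ℝ) ^ ((K-1)/K)
            = (((At t).card : ℝ) ^ ((k-1 : ℕ))) ^ (1/K) := by
          rw [← Real.rpow_natCast (((At t).card : ℝ)) (k-1), ← Real.rpow_mul hnpos.le,
            ← hcast]
          ring_nf
        rw [this]
        have hle : (((At t).card : ℝ) ^ ((k-1 : ℕ))) ≤ ∏ i ∈ s', c i t := by
          simp only [hc]
          push_cast
          exact_mod_cast F5 t ht
        calc (((At t).card : ℝ) ^ ((k-1 : ℕ))) ^ (1/K)
            ≤ (∏ i ∈ s', c i t) ^ (1/K) :=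
              Real.rpow_le_rpow (pow_nonneg (Nat.cast_nonneg _) _) hle hwpos.le
          _ = ∏ i ∈ s', c i t ^ (1/K) :=
              (Real.finset_prod_rpow s' _ (fun i _ => hc0 i t) _).symm
      · positivity
      · exact Real.rpow_nonneg hPa0 _
    have step2 : ∑ t ∈ T, ∏ i ∈ s', c i t ^ (1/K)
        ≤ ∏ i ∈ s', (∑ t ∈ T, c i t) ^ (1/K) := by
      apply my_holder s' T (fun i t => c i t) (fun _ => 1/K) (fun _ _ => hwpos)
      · rw [Finset.sum_const, nsmul_eq_mul, ← hkdef, hK]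
        field_simp
      · intro i _ t _; exact Nat.cast_nonneg _
    have step3 : ∀ i ∈ s', (∑ t ∈ T, c i t) ^ (1/K) ≤ P i ^ (1/K) := by
      intro i hi
      apply Real.rpow_le_rpow (Finset.sum_nonneg fun t _ => hc0 i t) _ hwpos.le
      simp only [hc, hP]
      exact_mod_cast F4 i hi
    have main : (A.card : ℝ) ≤ (Pa * ∏ i ∈ s', P i) ^ (1/K) := by
      have h1 : (A.card : ℝ) = ∑ t ∈ T, ((At t).card : ℝ) := by exact_mod_cast F1
      rw [h1]
      calc ∑ t ∈ T, ((At t).card : ℝ)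
          ≤ ∑ t ∈ T, Pa ^ (1/K) * ∏ i ∈ s', c i t ^ (1/K) :=
            Finset.sum_le_sum step1
        _ = Pa ^ (1/K) * ∑ t ∈ T, ∏ i ∈ s', c i t ^ (1/K) := by rw [Finset.mul_sum]
        _ ≤ Pa ^ (1/K) * ∏ i ∈ s', (∑ t ∈ T, c i t) ^ (1/K) :=
            mul_le_mul_of_nonneg_left step2 (Real.rpow_nonneg hPa0 _)
        _ ≤ Pa ^ (1/K) * ∏ i ∈ s', P i ^ (1/K) :=
            mul_le_mul_of_nonneg_left
              (Finset.prod_le_prod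
                (fun i _ => Real.rpow_nonneg (Finset.sum_nonneg fun t _ => hc0 i t) _)
                step3)
              (Real.rpow_nonneg hPa0 _)
        _ = (Pa * ∏ i ∈ s', P i) ^ (1/K) := by
            rw [Real.mul_rpow hPa0 (Finset.prod_nonneg fun i _ => hP0 i)]
            congr 1
            exact Real.finset_prod_rpow s' _ (fun i _ => hP0 i) _
    have final : (A.card : ℝ) ^ k ≤ Pa * ∏ i ∈ s', P i := by
      have hRnn : 0 ≤ Pa * ∏ i ∈ s', P i :=
        mul_nonneg hPa0 (Finset.prod_nonneg fun i _ => hP0 i)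
      calc (A.card : ℝ) ^ k ≤ ((Pa * ∏ i ∈ s', P i) ^ (1/K)) ^ k :=
            pow_le_pow_left₀ (Nat.cast_nonneg _) main k
        _ = Pa * ∏ i ∈ s', P i := by
            rw [← Real.rpow_natCast ((Pa * ∏ i ∈ s', P i) ^ (1/K)) k,
              ← Real.rpow_mul hRnn]
            rw [one_div, inv_mul_cancel₀ (ne_of_gt hKpos), Real.rpow_one]
    have natfinal : A.card ^ k
        ≤ (A.image (fun f => Function.update f a 0)).card
          * ∏ i ∈ s', (A.image (fun f => Function.update f i 0)).card := by
      simp only [hPa, hP] at final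
      exact_mod_cast final
    rw [Finset.card_insert_of_notMem ha, Finset.prod_insert ha]
    simpa using natfinal


lemma chain_infinite {d : ℕ} {A : Set (Fin d → ℤ)} (i : Fin d) (x : Fin d → ℤ) (ε : ℤ)
    (hε : ε = 1 ∨ ε = -1)
    (hnotin : ∀ n : ℕ, Function.update x i (x i + ε * n) ∉ A) :
    {y : Fin d → ℤ | Relation.ReflTransGen
      (fun a b => a ∉ A ∧ b ∉ A ∧ (∑ j, |a j - b j|) = 1) x y}.Infinite := by
  have hεabs : |ε| = 1 := by rcases hε with h | h <;> simp [h]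
  have hεne : ε ≠ 0 := by rcases hε with h | h <;> simp [h]
  set p : ℕ → (Fin d → ℤ) := fun n => Function.update x i (x i + ε * n) with hp
  have hp0 : p 0 = x := by
    simp only [hp, Nat.cast_zero, mul_zero, add_zero, Function.update_eq_self]
  have hstep : ∀ n : ℕ, (∑ j, |p n j - p (n+1) j|) = 1 := by
    intro n
    rw [Finset.sum_eq_single_of_mem i (Finset.mem_univ i)]
    · simp only [hp, Function.update_self]
      push_cast
      rw [show x i + ε * n - (x i + ε * (n+1)) = -ε by ring, abs_neg, hεabs]
    · intro j _ hj
      simp [hp, Function.update_of_ne hj]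
  have hchain : ∀ n : ℕ, Relation.ReflTransGen
      (fun a b => a ∉ A ∧ b ∉ A ∧ (∑ j, |a j - b j|) = 1) x (p n) := by
    intro n
    induction n with
    | zero => rw [hp0]
    | succ n ihn =>
      exact ihn.tail ⟨hnotin n, hnotin (n+1), hstep n⟩
  apply Set.infinite_of_injective_forall_mem (f := p)
  · intro n m hnm
    have := congrFun hnm i
    simp only [hp, Function.update_self, add_right_inj] at this
    exact Nat.cast_injective (mul_left_cancel₀ hεne this)
  · intro n
    exact hchain n

theorem stmt_5 (d : ℕ) (hd : 2 ≤ d) (A : Set (Fin d → ℤ)) (hA : A.Finite)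
    (hne : A.Nonempty) :
    2 * (A.ncard : ℝ) ^ (((d : ℝ) - 1) / d) ≤
      ({x : Fin d → ℤ | x ∉ A ∧ (∃ y ∈ A, (∑ i, |x i - y i|) = 1) ∧
        {y : Fin d → ℤ | Relation.ReflTransGen
            (fun a b => a ∉ A ∧ b ∉ A ∧ (∑ i, |a i - b i|) = 1) x y}.Infinite}.ncard
        : ℝ) := by
  classical
  set S : Set (Fin d → ℤ) := {x : Fin d → ℤ | x ∉ A ∧ (∃ y ∈ A, (∑ i, |x i - y i|) = 1) ∧
        {y : Fin d → ℤ | Relation.ReflTransGen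
            (fun a b => a ∉ A ∧ b ∉ A ∧ (∑ i, |a i - b i|) = 1) x y}.Infinite} with hSdef
  set F : Finset (Fin d → ℤ) := hA.toFinset with hF
  have hmemF : ∀ f, f ∈ F ↔ f ∈ A := fun f => hA.mem_toFinset
  have hFne : F.Nonempty := by
    obtain ⟨a, ha⟩ := hne
    exact ⟨a, (hmemF a).2 ha⟩
  have hncard : A.ncard = F.card := Set.ncard_eq_toFinset_card A hA
  -- Loomis–Whitney
  have hLW := my_LW (Finset.univ : Finset (Fin d)) F hFne (fun f _ j hj => absurd (Finset.mem_univ j) hj)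
  rw [Finset.card_univ, Fintype.card_fin] at hLW
  -- pick direction with maximal projection
  obtain ⟨i, _, hmax⟩ := Finset.exists_max_image (Finset.univ : Finset (Fin d))
    (fun j => (F.image (fun f => Function.update f j 0)).card)
    ⟨⟨0, by omega⟩, Finset.mem_univ _⟩
  set P : ℕ := (F.image (fun f => Function.update f i 0)).card with hPdef
  have hLW2 : F.card ^ (d - 1) ≤ P ^ d := by
    refine hLW.trans ?_
    calc ∏ j, (F.image (fun f => Function.update f j 0)).card
        ≤ ∏ _j : Fin d, P := Finset.prod_le_prod' (fun j _ => hmax j (Finset.mem_univ j))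
      _ = P ^ d := by rw [Finset.prod_const, Finset.card_univ, Fintype.card_fin]
  -- fibers and extremes
  set Proj : Finset (Fin d → ℤ) := F.image (fun f => Function.update f i 0) with hProj
  set Fib : (Fin d → ℤ) → Finset (Fin d → ℤ) :=
    fun g => F.filter (fun f => Function.update f i 0 = g) with hFib
  have hFibne : ∀ g ∈ Proj, (Fib g).Nonempty := by
    intro g hg
    obtain ⟨f, hf, rfl⟩ := Finset.mem_image.1 hg
    exact ⟨f, Finset.mem_filter.2 ⟨hf, rfl⟩⟩
  set M : (Fin d → ℤ) → ℤ := fun g => (((Fib g).image (fun f => f i)).max).unbotD 0 with hM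
  set m : (Fin d → ℤ) → ℤ := fun g => (((Fib g).image (fun f => f i)).min).untopD 0 with hm
  have hMspec : ∀ g ∈ Proj, (∃ f ∈ Fib g, f i = M g) ∧ ∀ f ∈ Fib g, f i ≤ M g := by
    intro g hg
    have hne' : ((Fib g).image (fun f => f i)).Nonempty := (hFibne g hg).image _
    have hMmax : M g = ((Fib g).image (fun f => f i)).max' hne' := by
      show WithBot.unbotD 0 ((Fib g).image (fun f => f i)).max = _
      rw [← Finset.coe_max' hne', WithBot.unbotD_coe]
    constructor
    · obtain ⟨f, hf, hfi⟩ := Finset.mem_image.1 (Finset.max'_mem _ hne')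
      exact ⟨f, hf, by rw [hMmax, hfi]⟩
    · intro f hf
      rw [hMmax]
      exact Finset.le_max' _ (f i) (Finset.mem_image_of_mem (fun f => f i) hf)
  have hmspec : ∀ g ∈ Proj, (∃ f ∈ Fib g, f i = m g) ∧ ∀ f ∈ Fib g, m g ≤ f i := by
    intro g hg
    have hne' : ((Fib g).image (fun f => f i)).Nonempty := (hFibne g hg).image _
    have hmmin : m g = ((Fib g).image (fun f => f i)).min' hne' := by
      show WithTop.untopD 0 ((Fib g).image (fun f => f i)).min = _
      rw [← Finset.coe_min' hne', WithTop.untopD_coe]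
    constructor
    · obtain ⟨f, hf, hfi⟩ := Finset.mem_image.1 (Finset.min'_mem _ hne')
      exact ⟨f, hf, by rw [hmmin, hfi]⟩
    · intro f hf
      rw [hmmin]
      exact Finset.min'_le _ (f i) (Finset.mem_image_of_mem (fun f => f i) hf)
  have hgi0 : ∀ g ∈ Proj, g i = 0 := by
    intro g hg
    obtain ⟨f, _, rfl⟩ := Finset.mem_image.1 hg
    exact Function.update_self i 0 f
  -- generic: a point over g with i-coordinate out of range is not in A
  have houtA : ∀ g ∈ Proj, ∀ v : ℤ, (M g < v ∨ v < m g) → Function.update g i v ∉ A := by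
    intro g hg v hv hmem
    have hFmem : Function.update g i v ∈ F := (hmemF _).2 hmem
    have hfib : Function.update g i v ∈ Fib g := by
      refine Finset.mem_filter.2 ⟨hFmem, ?_⟩
      rw [Function.update_idem]
      exact Function.update_eq_self_iff.2 (hgi0 g hg).symm
    have hval : (Function.update g i v) i = v := Function.update_self i v g
    rcases hv with h | h
    · have := (hMspec g hg).2 _ hfib
      rw [hval] at this; omega
    · have := (hmspec g hg).2 _ hfib
      rw [hval] at this; omega
  set tp : (Fin d → ℤ) → (Fin d → ℤ) := fun g => Function.update g i (M g + 1) with htp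
  set bt : (Fin d → ℤ) → (Fin d → ℤ) := fun g => Function.update g i (m g - 1) with hbt
  -- membership of extreme points in S
  have hmemS : ∀ g ∈ Proj, tp g ∈ S ∧ bt g ∈ S := by
    intro g hg
    obtain ⟨⟨fM, hfM, hfMi⟩, hMub⟩ := hMspec g hg
    obtain ⟨⟨fm, hfm, hfmi⟩, hmlb⟩ := hmspec g hg
    have hfMA : fM ∈ A := (hmemF fM).1 (Finset.mem_filter.1 hfM).1
    have hfmA : fm ∈ A := (hmemF fm).1 (Finset.mem_filter.1 hfm).1
    have hgfM : Function.update fM i 0 = g := (Finset.mem_filter.1 hfM).2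
    have hgfm : Function.update fm i 0 = g := (Finset.mem_filter.1 hfm).2
    constructor
    · refine ⟨?_, ⟨fM, hfMA, ?_⟩, ?_⟩
      · exact houtA g hg _ (Or.inl (by omega))
      · rw [Finset.sum_eq_single_of_mem i (Finset.mem_univ i)]
        · rw [htp]
          simp only [Function.update_self, hfMi]
          rw [show M g + 1 - M g = (1:ℤ) by ring, abs_one]
        · intro j _ hj
          rw [htp]
          simp only [Function.update_of_ne hj]
          rw [← hgfM, Function.update_of_ne hj]
          simp
      · apply chain_infinite i (tp g) 1 (Or.inl rfl)
        intro n
        have : Function.update (tp g) i (tp g i + 1 * n) = Function.update g i (M g + 1 + n) := by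
          rw [htp]
          simp only [Function.update_idem, Function.update_self]
          ring_nf
        rw [this]
        exact houtA g hg _ (Or.inl (by omega))
    · refine ⟨?_, ⟨fm, hfmA, ?_⟩, ?_⟩
      · exact houtA g hg _ (Or.inr (by omega))
      · rw [Finset.sum_eq_single_of_mem i (Finset.mem_univ i)]
        · rw [hbt]
          simp only [Function.update_self, hfmi]
          rw [show m g - 1 - m g = (-1:ℤ) by ring, abs_neg, abs_one]
        · intro j _ hj
          rw [hbt]
          simp only [Function.update_of_ne hj]
          rw [← hgfm, Function.update_of_ne hj]
          simp
      · apply chain_infinite i (bt g) (-1) (Or.inr rfl)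
        intro n
        have : Function.update (bt g) i (bt g i + (-1) * n) = Function.update g i (m g - 1 - n) := by
          rw [hbt]
          simp only [Function.update_idem, Function.update_self]
          ring_nf
        rw [this]
        exact houtA g hg _ (Or.inr (by omega))
  -- S is finite
  have hSfin : S.Finite := by
    apply Set.Finite.subset (Set.Finite.biUnion hA
      (fun y _ => Set.finite_Icc (y - 1) (y + 1)))
    intro x hx
    obtain ⟨_, ⟨y, hyA, hdist⟩, _⟩ := hx
    refine Set.mem_biUnion hyA ?_
    constructor
    · intro j
      have h1 : |x j - y j| ≤ ∑ k, |x k - y k| :=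
        Finset.single_le_sum (f := fun k => |x k - y k|) (fun k _ => abs_nonneg _)
          (Finset.mem_univ j)
      rw [hdist] at h1
      have := abs_le.1 h1
      simp only [Pi.sub_apply, Pi.one_apply]
      omega
    · intro j
      have h1 : |x j - y j| ≤ ∑ k, |x k - y k| :=
        Finset.single_le_sum (f := fun k => |x k - y k|) (fun k _ => abs_nonneg _)
          (Finset.mem_univ j)
      rw [hdist] at h1
      have := abs_le.1 h1
      simp only [Pi.add_apply, Pi.one_apply]
      omega
  -- counting: 2 * P ≤ S.ncard
  have hproject : ∀ g ∈ Proj, Function.update (tp g) i 0 = g ∧ Function.update (bt g) i 0 = g := by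
    intro g hg
    constructor
    · rw [htp]; simp only [Function.update_idem]
      exact Function.update_eq_self_iff.2 (hgi0 g hg).symm
    · rw [hbt]; simp only [Function.update_idem]
      exact Function.update_eq_self_iff.2 (hgi0 g hg).symm
  have hmM : ∀ g ∈ Proj, m g ≤ M g := by
    intro g hg
    obtain ⟨⟨f, hf, hfi⟩, _⟩ := hMspec g hg
    have := (hmspec g hg).2 f hf
    omega
  have hcount : 2 * P ≤ S.ncard := by
    rw [Set.ncard_eq_toFinset_card S hSfin]
    have hsub : Proj.image tp ∪ Proj.image bt ⊆ hSfin.toFinset := by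
      intro x hx
      rw [Set.Finite.mem_toFinset]
      rcases Finset.mem_union.1 hx with h | h
      · obtain ⟨g, hg, rfl⟩ := Finset.mem_image.1 h
        exact (hmemS g hg).1
      · obtain ⟨g, hg, rfl⟩ := Finset.mem_image.1 h
        exact (hmemS g hg).2
    have hinj_tp : Set.InjOn tp Proj := by
      intro g hg g' hg' h
      rw [← (hproject g hg).1, ← (hproject g' hg').1, h]
    have hinj_bt : Set.InjOn bt Proj := by
      intro g hg g' hg' h
      rw [← (hproject g hg).2, ← (hproject g' hg').2, h]
    have hdisj : Disjoint (Proj.image tp) (Proj.image bt) := by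
      rw [Finset.disjoint_left]
      intro x hx1 hx2
      obtain ⟨g, hg, rfl⟩ := Finset.mem_image.1 hx1
      obtain ⟨g', hg', he⟩ := Finset.mem_image.1 hx2
      have hgg : g' = g := by
        rw [← (hproject g hg).1, ← (hproject g' hg').2, he]
      subst hgg
      have := congrFun he i
      rw [htp, hbt] at this
      simp only [Function.update_self] at this
      have := hmM g' hg'
      omega
    calc 2 * P = (Proj.image tp).card + (Proj.image bt).card := by
          rw [Finset.card_image_of_injOn hinj_tp, Finset.card_image_of_injOn hinj_bt, hPdef]
          ring
      _ = (Proj.image tp ∪ Proj.image bt).card := (Finset.card_union_of_disjoint hdisj).symm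
      _ ≤ hSfin.toFinset.card := Finset.card_le_card hsub
  -- numeric conclusion
  have hP1 : 1 ≤ P := Finset.Nonempty.card_pos (hFne.image _)
  have hreal : (A.ncard : ℝ) ^ (((d : ℝ) - 1) / d) ≤ (P : ℝ) := by
    have hd0 : (d : ℝ) ≠ 0 := by positivity
    have hbase : (0:ℝ) ≤ (A.ncard : ℝ) := Nat.cast_nonneg _
    apply le_of_pow_le_pow_left₀ (by omega : d ≠ 0) (Nat.cast_nonneg _)
    have h1 : ((A.ncard : ℝ) ^ (((d : ℝ) - 1) / d)) ^ d
        = (A.ncard : ℝ) ^ ((d : ℝ) - 1) := by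
      rw [← Real.rpow_natCast ((A.ncard : ℝ) ^ (((d : ℝ) - 1) / d)) d,
        ← Real.rpow_mul hbase]
      congr 1
      field_simp
    rw [h1]
    have h2 : (A.ncard : ℝ) ^ ((d : ℝ) - 1) = (A.ncard : ℝ) ^ (d - 1 : ℕ) := by
      rw [← Real.rpow_natCast ((A.ncard : ℝ)) (d - 1)]
      congr 1
      push_cast [Nat.cast_sub (by omega : 1 ≤ d)]
      ring
    rw [h2, hncard]
    exact_mod_cast hLW2
  calc 2 * (A.ncard : ℝ) ^ (((d : ℝ) - 1) / d) ≤ 2 * (P : ℝ) := by linarith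
    _ ≤ (S.ncard : ℝ) := by exact_mod_cast hcount
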